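/- With f and f̃_n as above, the total variation of f̃_n on (0,T) satisfies TV(f̃_n) ≤ TV(f) + 1/(nT). -/

import Mathlib

open MeasureTheory Filter Set Topology

theorem stmt3 {T : ℝ} (hT : 0 < T) (f : ℝ → ℝ)
    (hnonneg : ∀ t ∈ Set.Ioo 0 T, 0 ≤ f t)
    (hbdd : ∃ M : ℝ, ∀ t ∈ Set.Ioo 0 T, f t ≤ M)
    (hcadlag : ∀ t ∈ Set.Ioo 0 T,
      ContinuousWithinAt f (Set.Ici t) t ∧ ∃ l : ℝ, Tendsto f (nhdsWithin t (Set.Iio t)) (nhds l))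
    (hBV : BoundedVariationOn f (Set.Ioo 0 T))
    (n k : ℕ) (hn : 1 ≤ n) (hk : 1 ≤ k) (t : ℕ → ℝ)
    (ht0 : t 0 = 0) (htk : t k = T) (hmono : StrictMonoOn t (Set.Iic k))
    (hosc : ∀ i < k, ∀ s ∈ Set.Ioo 0 T, ∀ u ∈ Set.Ioo 0 T,
      s ∈ Set.Ico (t i) (t (i+1)) → u ∈ Set.Ico (t i) (t (i+1)) →
      |f s - f u| ≤ 1 / (n * T))
    (g : ℝ → ℝ)
    (hg : ∀ i < k, ∀ s ∈ Set.Ioo 0 T, s ∈ Set.Ico (t i) (t (i+1)) →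
      g s = (1 / (k * n * T)) *
        (sSup {j : ℕ | ∀ u ∈ Set.Ioo 0 T, u ∈ Set.Ico (t i) (t (i+1)) →
          (j : ℝ) / (k * n * T) ≤ f u} : ℕ)) :
    eVariationOn g (Set.Ioo 0 T) ≤ eVariationOn f (Set.Ioo 0 T) + ENNReal.ofReal (1 / (n * T)) := by
  classical
  obtain ⟨M, hM⟩ := hbdd
  have hk0 : (0:ℝ) < k := by exact_mod_cast hk
  have hn0 : (0:ℝ) < n := by exact_mod_cast hn
  have hKpos : (0:ℝ) < (k:ℝ) * n * T := mul_pos (mul_pos hk0 hn0) hT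
  have htmono : MonotoneOn t (Set.Iic k) := hmono.monotoneOn
  -- nonemptiness of each cell
  have hcell : ∀ i < k, ∃ x, x ∈ Set.Ioo 0 T ∧ x ∈ Set.Ico (t i) (t (i+1)) := by
    intro i hi
    rcases Nat.eq_zero_or_pos i with h0 | hpos
    · subst h0
      have h1k : (1:ℕ) ∈ Set.Iic k := by simpa using hk
      have ht1 : 0 < t 1 := by
        have := hmono (by simp : (0:ℕ) ∈ Set.Iic k) h1k (by norm_num)
        linarith [ht0 ▸ this]
      have ht1T : t 1 ≤ T := by
        have := htmono h1k (by simp : k ∈ Set.Iic k) hk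
        linarith [htk ▸ this]
      exact ⟨t 1 / 2, ⟨by linarith, by linarith⟩, ⟨by rw [ht0]; linarith, by linarith⟩⟩
    · have hik : i ∈ Set.Iic k := le_of_lt hi
      have hi1k : i + 1 ∈ Set.Iic k := hi
      have h1 : 0 < t i := by
        have := hmono (by simp : (0:ℕ) ∈ Set.Iic k) hik hpos
        linarith [ht0 ▸ this]
      have h2 : t i < T := by
        have := hmono hik (by simp : k ∈ Set.Iic k) hi
        linarith [htk ▸ this]
      have h3 : t i < t (i+1) := hmono hik hi1k (Nat.lt_succ_self i)
      exact ⟨t i, ⟨h1, h2⟩, ⟨le_refl _, h3⟩⟩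
  -- the sup sets
  set S : ℕ → Set ℕ := fun i => {j : ℕ | ∀ u ∈ Set.Ioo 0 T, u ∈ Set.Ico (t i) (t (i+1)) →
      (j : ℝ) / ((k:ℝ) * n * T) ≤ f u} with hS
  set N : ℕ → ℕ := fun i => sSup (S i) with hNdef
  set c : ℕ → ℝ := fun i => (1 / ((k:ℝ) * n * T)) * N i with hc
  have hgc : ∀ i < k, ∀ x ∈ Set.Ioo 0 T, x ∈ Set.Ico (t i) (t (i+1)) → g x = c i := by
    intro i hi x hx hx'
    exact hg i hi x hx hx'
  have hSmem : ∀ i < k, N i ∈ S i ∧ N i + 1 ∉ S i := by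
    intro i hi
    obtain ⟨x, hx, hx'⟩ := hcell i hi
    have hbdd' : BddAbove (S i) := by
      refine ⟨⌈((k:ℝ) * n * T) * M⌉₊, fun j hj => ?_⟩
      have h1 : (j:ℝ) / ((k:ℝ) * n * T) ≤ f x := hj x hx hx'
      have h2 : (j:ℝ) ≤ ((k:ℝ) * n * T) * M := by
        have := hM x hx
        rw [div_le_iff₀ hKpos] at h1
        nlinarith
      exact_mod_cast h2.trans (Nat.le_ceil _)
    have hne : (S i).Nonempty := by
      refine ⟨0, fun u hu hu' => ?_⟩
      simp only [Nat.cast_zero, zero_div]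
      exact hnonneg u hu
    constructor
    · exact Nat.sSup_mem hne hbdd'
    · intro hmem
      have h2 := le_csSup hbdd' hmem
      simp only [hNdef] at h2
      omega
  -- choose near-infimum points in each cell
  have hex : ∀ i : ℕ, ∃ x : ℝ, i < k → x ∈ Set.Ioo 0 T ∧ x ∈ Set.Ico (t i) (t (i+1)) ∧
      c i ≤ f x ∧ f x < c i + 1 / ((k:ℝ) * n * T) := by
    intro i
    by_cases hi : i < k
    · obtain ⟨hmem, hnotmem⟩ := hSmem i hi
      simp only [hS, Set.mem_setOf_eq, not_forall] at hnotmem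
      obtain ⟨x, hx, hx', hlt⟩ := hnotmem
      push_neg at hlt
      refine ⟨x, fun _ => ⟨hx, hx', ?_, ?_⟩⟩
      · have := hmem x hx hx'
        rw [hc]
        simp only [one_div]
        rw [inv_mul_eq_div]
        exact this
      · have : (↑(N i) + 1) / ((k:ℝ) * n * T) = c i + 1 / ((k:ℝ) * n * T) := by
          rw [hc]; field_simp
        rw [← this]
        push_cast at hlt ⊢
        exact hlt
    · exact ⟨0, fun h => absurd h hi⟩
  choose s hs using hex
  -- monotonicity of s on valid indices
  have hsmono : ∀ i j : ℕ, i ≤ j → j < k → s i ≤ s j := by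
    intro i j hij hj
    rcases eq_or_lt_of_le hij with rfl | hlt
    · exact le_refl _
    · have hi : i < k := lt_trans hlt hj
      obtain ⟨-, hsi, -, -⟩ := hs i hi
      obtain ⟨-, hsj, -, -⟩ := hs j hj
      have h2 : t (i+1) ≤ t j := htmono (Set.mem_Iic.mpr (by omega)) (Set.mem_Iic.mpr hj.le) (by omega)
      linarith [hsi.2, hsj.1]
  -- the cell index function
  set I : ℝ → ℕ := fun x => Nat.findGreatest (fun i => t i ≤ x) k with hIdef
  have hI : ∀ x ∈ Set.Ioo 0 T, I x < k ∧ t (I x) ≤ x ∧ x < t (I x + 1) := by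
    intro x hx
    have hP0 : t 0 ≤ x := by rw [ht0]; exact hx.1.le
    have hle : t (I x) ≤ x := by
      simp only [hIdef]
      exact Nat.findGreatest_spec (P := fun i => t i ≤ x) (Nat.zero_le k) hP0
    have hIk : I x ≤ k := by
      simp only [hIdef]
      exact Nat.findGreatest_le (P := fun i => t i ≤ x) k
    have hlt : I x < k := by
      rcases lt_or_eq_of_le hIk with h | h
      · exact h
      · exfalso
        rw [h, htk] at hle
        linarith [hx.2]
    refine ⟨hlt, hle, ?_⟩
    by_contra h
    push_neg at h
    have hgr : ¬ (fun i => t i ≤ x) (I x + 1) := by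
      have hlt' : Nat.findGreatest (fun i => t i ≤ x) k < I x + 1 := by
        simp only [hIdef]
        exact Nat.lt_succ_self _
      exact Nat.findGreatest_is_greatest hlt' hlt
    exact hgr h
  have hImono : ∀ x ∈ Set.Ioo 0 T, ∀ y ∈ Set.Ioo 0 T, x ≤ y → I x ≤ I y := by
    intro x hx y hy hxy
    have h1 := (hI x hx).1
    have h2 := (hI x hx).2.1.trans hxy
    simp only [hIdef]
    exact Nat.le_findGreatest (P := fun i => t i ≤ y) (le_of_lt h1) h2
  have hgI : ∀ x ∈ Set.Ioo 0 T, g x = c (I x) := fun x hx =>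
    hgc _ (hI x hx).1 x hx ⟨(hI x hx).2.1, (hI x hx).2.2⟩
  -- jump bound at each cell boundary
  have hpair : ∀ i, i + 1 < k → edist (c i) (c (i+1)) ≤
      edist (f (s (i+1))) (f (s i)) + ENNReal.ofReal (1/((k:ℝ)*n*T)) := by
    intro i hi1
    have hi : i < k := by omega
    obtain ⟨-, -, ha1, ha2⟩ := hs i hi
    obtain ⟨-, -, hb1, hb2⟩ := hs (i+1) hi1
    rw [edist_dist, edist_dist, Real.dist_eq, Real.dist_eq,
      ← ENNReal.ofReal_add (abs_nonneg _) (div_nonneg (by norm_num) hKpos.le)]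
    apply ENNReal.ofReal_le_ofReal
    rcases abs_cases (f (s (i+1)) - f (s i)) with ⟨h, hsg⟩ | ⟨h, hsg⟩ <;>
      rcases abs_cases (c i - c (i+1)) with ⟨h', hsg'⟩ | ⟨h', hsg'⟩ <;> linarith
  -- the extended sequence of near-infimum points
  have hwmono : Monotone (fun j => s (min j (k-1))) := by
    intro a b hab
    exact hsmono _ _ (min_le_min hab (le_refl _)) (by omega)
  have hwmem : ∀ j, s (min j (k-1)) ∈ Set.Ioo 0 T :=
    fun j => ((hs _ (by omega : min j (k-1) < k)).1)
  have hvar := eVariationOn.sum_le (f := f) (n := k-1) hwmono hwmem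
  rw [eVariationOn]
  refine iSup_le ?_
  rintro ⟨m, u, hu, hus⟩
  show ∑ j ∈ Finset.range m, edist (g (u (j+1))) (g (u j)) ≤ _
  have hJmono : Monotone (fun j => I (u j)) := fun a b hab =>
    hImono _ (hus a) _ (hus b) (hu hab)
  have hstep : ∀ j, edist (g (u (j+1))) (g (u j)) ≤
      ∑ i ∈ Finset.Ico (I (u j)) (I (u (j+1))), edist (c i) (c (i+1)) := by
    intro j
    rw [hgI _ (hus (j+1)), hgI _ (hus j), edist_comm]
    exact edist_le_Ico_sum_edist c (hJmono (Nat.le_succ j))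
  calc ∑ j ∈ Finset.range m, edist (g (u (j+1))) (g (u j))
      ≤ ∑ j ∈ Finset.range m, ∑ i ∈ Finset.Ico (I (u j)) (I (u (j+1))), edist (c i) (c (i+1)) :=
        Finset.sum_le_sum (fun j _ => hstep j)
    _ = ∑ i ∈ Finset.Ico (I (u 0)) (I (u m)), edist (c i) (c (i+1)) := by
        induction m with
        | zero => simp
        | succ m ih =>
          rw [Finset.sum_range_succ, ih]
          exact Finset.sum_Ico_consecutive _ (hJmono (Nat.zero_le m)) (hJmono (Nat.le_succ m))
    _ ≤ ∑ i ∈ Finset.range (k-1), edist (c i) (c (i+1)) := by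
        apply Finset.sum_le_sum_of_subset
        intro x hx
        simp only [Finset.mem_Ico, Finset.mem_range] at hx ⊢
        have := (hI (u m) (hus m)).1
        omega
    _ ≤ ∑ i ∈ Finset.range (k-1),
          (edist (f (s (i+1))) (f (s i)) + ENNReal.ofReal (1/((k:ℝ)*n*T))) := by
        refine Finset.sum_le_sum (fun i hi => ?_)
        simp only [Finset.mem_range] at hi
        exact hpair i (by omega)
    _ = ∑ i ∈ Finset.range (k-1), edist (f (s (i+1))) (f (s i))
          + ((k-1 : ℕ) : ENNReal) * ENNReal.ofReal (1/((k:ℝ)*n*T)) := by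
        rw [Finset.sum_add_distrib, Finset.sum_const, nsmul_eq_mul, Finset.card_range]
    _ ≤ eVariationOn f (Set.Ioo 0 T) + ENNReal.ofReal (1 / (n * T)) := by
        refine add_le_add ?_ ?_
        · have heq : ∑ i ∈ Finset.range (k-1), edist (f (s (i+1))) (f (s i))
              = ∑ i ∈ Finset.range (k-1),
                edist (f (s (min (i+1) (k-1)))) (f (s (min i (k-1)))) := by
            refine Finset.sum_congr rfl (fun i hi => ?_)
            simp only [Finset.mem_range] at hi
            rw [min_eq_left (by omega), min_eq_left (by omega)]
          rw [heq]
          exact hvar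
        · rw [← ENNReal.ofReal_natCast (k-1), ← ENNReal.ofReal_mul (by positivity)]
          apply ENNReal.ofReal_le_ofReal
          have hkk : ((k-1:ℕ):ℝ) ≤ (k:ℝ) := by exact_mod_cast Nat.sub_le k 1
          rw [mul_one_div, div_le_div_iff₀ hKpos (mul_pos hn0 hT)]
          nlinarith [mul_pos hn0 hT]
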